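/- Let c, d, k, χ, J > 0 with 4 k χ J > c³. Then there is no differentiable nonnegative function ρ : (−∞, 0] → ℝ satisfying d ρ'(z) = −c ρ(z) + (k χ / c) ρ(z)² + J for all z ≤ 0. -/
import Mathlib


open MeasureTheory Filter

/-- Negative discriminant (c³ < 4kχJ) rules out nonnegative solutions of the
back-of-the-wave ODE in the logarithmic-sensitivity 'go-or-grow' model. -/
theorem stmt_17 (c d k χ J : ℝ) (hc : 0 < c) (hd : 0 < d) (hk : 0 < k) (hχ : 0 < χ)
    (hJ : 0 < J) (hdisc : c ^ 3 < 4 * k * χ * J) :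
    ¬ ∃ ρ : ℝ → ℝ, DifferentiableOn ℝ ρ (Set.Iic 0) ∧ (∀ z ≤ 0, 0 ≤ ρ z) ∧
      ∀ z ≤ 0, d * derivWithin ρ (Set.Iic 0) z
        = -c * ρ z + (k * χ / c) * ρ z ^ 2 + J := by
  rintro ⟨ρ, hdiff, hpos, hode⟩
  set m : ℝ := (4 * k * χ * J - c ^ 3) / (4 * k * χ) with hm
  have hm0 : 0 < m := div_pos (by linarith) (by positivity)
  have hC : 0 < m / d := by positivity
  -- the quadratic RHS is bounded below by m
  have hquad : ∀ r : ℝ, m ≤ -c * r + (k * χ / c) * r ^ 2 + J := by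
    intro r
    set q : ℝ := k * χ / c with hqdef
    have hq : q * c = k * χ := div_mul_cancel₀ _ hc.ne'
    rw [hm, div_le_iff₀ (by positivity)]
    have h4 : (q * r ^ 2 - c * r) * (q * c) = (q * r ^ 2 - c * r) * (k * χ) := by rw [hq]
    nlinarith [h4, mul_nonneg (sq_nonneg (2 * q * r - c)) hc.le]
  -- deriv bound on the interior
  have hderiv : ∀ x ∈ interior (Set.Iic (0:ℝ)), m / d ≤ deriv ρ x := by
    intro x hx
    rw [interior_Iic] at hx
    have hx0 : x ≤ 0 := le_of_lt hx
    have hnhds : Set.Iic (0:ℝ) ∈ nhds x := Iic_mem_nhds hx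
    have heq : derivWithin ρ (Set.Iic 0) x = deriv ρ x := derivWithin_of_mem_nhds hnhds
    have h1 := hode x hx0
    rw [heq] at h1
    have h2 : deriv ρ x = (-c * ρ x + (k * χ / c) * ρ x ^ 2 + J) / d := by
      rw [eq_div_iff hd.ne']; linarith
    rw [h2]
    gcongr
    exact hquad (ρ x)
  have hcont : ContinuousOn ρ (Set.Iic 0) := hdiff.continuousOn
  have hconv : Convex ℝ (Set.Iic (0:ℝ)) := convex_Iic 0
  have hdiff' : DifferentiableOn ℝ ρ (interior (Set.Iic (0:ℝ))) :=
    hdiff.mono interior_subset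
  set z : ℝ := -(ρ 0 + 1) / (m / d) with hz
  have hz0 : z ≤ 0 := by
    have h1 : 0 ≤ ρ 0 := hpos 0 le_rfl
    rw [hz]
    exact div_nonpos_of_nonpos_of_nonneg (by linarith) (le_of_lt hC)
  have key := hconv.mul_sub_le_image_sub_of_le_deriv hcont hdiff' hderiv
    z hz0 0 Set.self_mem_Iic hz0
  have hcz : m / d * (0 - z) = ρ 0 + 1 := by
    rw [hz]
    field_simp
    ring
  rw [hcz] at key
  have := hpos z hz0
  linarith
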